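/- Fix $k\ge2$ and integers $i$ with $0\le i\le k-1$, real $r\in(0,1)$ with $0<i+r<k$, and set $\alpha=(i+r)/(k-(i+r))$. The inequality $r < i^2 + \frac{(i+r)^2(2r-1)}{2(1-r)r\alpha}$ holds in each of the following cases: (i) $i>0$ and $r\in[\tfrac12,1)$; (ii) $i=0$ and $r\in(\frac{k}{2k-1},1)$; (iii) $i=k-1$ and $r\in(\frac{k-1}{2k^2-2k-1},1)$. -/

import Mathlib

/-- (Lemma 5.10) For integers `k ≥ 2`, `0 ≤ i ≤ k-1`, real `r ∈ (0,1)` with `0 < i + r < k`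
and `α = (i+r)/(k-(i+r))`, the inequality `r < i² + (i+r)²(2r-1)/(2(1-r)rα)` holds if
(i) `i > 0` and `r ∈ [1/2,1)`, or (ii) `i = 0` and `r ∈ (k/(2k-1), 1)`, or
(iii) `i = k-1` and `r ∈ ((k-1)/(2k²-2k-1), 1)`. -/
theorem stmt17 (k i : ℕ) (hk : 2 ≤ k) (hik : i ≤ k - 1)
    (r : ℝ) (hr0 : 0 < r) (hr1 : r < 1)
    (hlt : (i : ℝ) + r < (k : ℝ))
    (α : ℝ) (hα : α = ((i : ℝ) + r) / ((k : ℝ) - ((i : ℝ) + r)))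
    (hcase :
      (0 < i ∧ 1/2 ≤ r) ∨
      (i = 0 ∧ (k : ℝ) / (2 * (k : ℝ) - 1) < r) ∨
      (i = k - 1 ∧ ((k : ℝ) - 1) / (2 * (k : ℝ) ^ 2 - 2 * k - 1) < r)) :
    r < (i : ℝ) ^ 2 + ((i : ℝ) + r) ^ 2 * (2 * r - 1) / (2 * (1 - r) * r * α) := by
  have hk' : (2 : ℝ) ≤ (k : ℝ) := by exact_mod_cast hk
  have hi0 : (0 : ℝ) ≤ (i : ℝ) := Nat.cast_nonneg i
  have hir : (0 : ℝ) < (i : ℝ) + r := by linarith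
  have hd : (0 : ℝ) < (k : ℝ) - ((i : ℝ) + r) := by linarith
  have h1r : (0 : ℝ) < 1 - r := by linarith
  have hden : (0 : ℝ) < 2 * (1 - r) * r := by positivity
  have hsimp : ((i : ℝ) + r) ^ 2 * (2 * r - 1) / (2 * (1 - r) * r * α)
      = ((i : ℝ) + r) * (2 * r - 1) * ((k : ℝ) - ((i : ℝ) + r)) / (2 * (1 - r) * r) := by
    rw [hα]
    field_simp
  rw [hsimp, ← sub_lt_iff_lt_add', lt_div_iff₀ hden]
  rcases hcase with ⟨hi, hr⟩ | ⟨hi, hr⟩ | ⟨hi, hr⟩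
  · have hi1 : (1 : ℝ) ≤ (i : ℝ) := by exact_mod_cast hi
    have hL : (r - (i : ℝ) ^ 2) * (2 * (1 - r) * r) < 0 :=
      mul_neg_of_neg_of_pos (by nlinarith) hden
    have hR : (0 : ℝ) ≤ ((i : ℝ) + r) * (2 * r - 1) * ((k : ℝ) - ((i : ℝ) + r)) := by
      have := mul_nonneg (mul_nonneg hir.le (by linarith : (0:ℝ) ≤ 2*r-1)) hd.le
      linarith
    linarith
  · subst hi
    have hk1 : (0 : ℝ) < 2 * (k : ℝ) - 1 := by linarith
    rw [div_lt_iff₀ hk1] at hr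
    simp only [Nat.cast_zero] at *
    nlinarith [mul_pos h1r hr0]
  · have hi' : (i : ℝ) = (k : ℝ) - 1 := by
      have : i + 1 = k := by omega
      have := congrArg (Nat.cast : ℕ → ℝ) this
      push_cast at this
      linarith
    have hk2 : (0 : ℝ) < 2 * (k : ℝ) ^ 2 - 2 * k - 1 := by nlinarith
    rw [div_lt_iff₀ hk2] at hr
    rw [hi'] at *
    nlinarith [mul_pos h1r hr0]
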